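/- Let G be a directed partially ordered abelian group. Then G is a dimension group if and only if its positive cone G⁺ satisfies the strong Riesz interpolation property: for every natural number n ≥ 1 and all a, b, c, d ∈ G⁺ with n•a + b = n•c + d, there exist u, v, w, z ∈ G⁺ such that a = u + v, b = n•w + z, c = u + w, and d = n•v + z. -/

import Mathlib

section Aux
variable {G : Type*} [AddCommGroup G] [PartialOrder G]
  [CovariantClass G G (· + ·) (· ≤ ·)]

private lemma aux_add_le_add {a b c d : G} (h1 : a ≤ b) (h2 : c ≤ d) :
    a + c ≤ b + d := by
  calc a + c ≤ a + d := add_le_add_right h2 a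
  _ = d + a := add_comm _ _
  _ ≤ d + b := add_le_add_right h1 d
  _ = b + d := add_comm _ _

private lemma aux_smul_le {n : ℕ} {a b : G} (h : a ≤ b) : n • a ≤ n • b := by
  induction n with
  | zero => simp
  | succ k ih => rw [succ_nsmul, succ_nsmul]; exact aux_add_le_add ih h

private lemma aux_smul_nonneg {n : ℕ} {a : G} (h : 0 ≤ a) : 0 ≤ n • a := by
  simpa using aux_smul_le (n := n) h

private lemma aux_le_smul {n : ℕ} (hn : 1 ≤ n) {a : G} (h : 0 ≤ a) : a ≤ n • a := by
  obtain ⟨m, rfl⟩ := Nat.exists_eq_add_of_le hn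
  rw [add_nsmul, one_nsmul]
  have := add_le_add_left (aux_smul_nonneg (n := m) h) a
  simpa using this
end Aux

section Key
variable {G : Type*} [AddCommGroup G] [PartialOrder G]
  [CovariantClass G G (· + ·) (· ≤ ·)]

private lemma aux_interp3
    (hI : ∀ a₀ a₁ b₀ b₁ : G, a₀ ≤ b₀ → a₀ ≤ b₁ → a₁ ≤ b₀ → a₁ ≤ b₁ →
       ∃ x : G, a₀ ≤ x ∧ a₁ ≤ x ∧ x ≤ b₀ ∧ x ≤ b₁)
    (x1 x2 x3 y1 y2 : G) (h11 : x1 ≤ y1) (h12 : x1 ≤ y2) (h21 : x2 ≤ y1)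
    (h22 : x2 ≤ y2) (h31 : x3 ≤ y1) (h32 : x3 ≤ y2) :
    ∃ t : G, x1 ≤ t ∧ x2 ≤ t ∧ x3 ≤ t ∧ t ≤ y1 ∧ t ≤ y2 := by
  obtain ⟨s, hs1, hs2, hs3, hs4⟩ := hI x1 x2 y1 y2 h11 h12 h21 h22
  obtain ⟨t, ht1, ht2, ht3, ht4⟩ := hI s x3 y1 y2 hs3 hs4 h31 h32
  exact ⟨t, hs1.trans ht1, hs2.trans ht1, ht2, ht3, ht4⟩

/-- Key lemma: in a dimension group, if `e ≤ n•a` and `e ≤ n•c` with `a, c ≥ 0`,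
there is `u` with `0 ≤ u ≤ a, c` and `e ≤ n•u`. -/
private lemma aux_key
    (hU : ∀ n : ℕ, 1 ≤ n → ∀ x : G, 0 ≤ n • x → 0 ≤ x)
    (hI : ∀ a₀ a₁ b₀ b₁ : G, a₀ ≤ b₀ → a₀ ≤ b₁ → a₁ ≤ b₀ → a₁ ≤ b₁ →
       ∃ x : G, a₀ ≤ x ∧ a₁ ≤ x ∧ x ≤ b₀ ∧ x ≤ b₁) :
    ∀ n : ℕ, 1 ≤ n → ∀ e a c : G, 0 ≤ a → 0 ≤ c → e ≤ n • a → e ≤ n • c →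
      ∃ u : G, 0 ≤ u ∧ u ≤ a ∧ u ≤ c ∧ e ≤ n • u := by
  intro n hn
  induction n, hn using Nat.le_induction with
  | base =>
    intro e a c ha hc h1 h2
    rw [one_nsmul] at h1 h2
    obtain ⟨u, hu1, hu2, hu3, hu4⟩ := hI e 0 a c h1 h2 ha hc
    exact ⟨u, hu2, hu3, hu4, by rwa [one_nsmul]⟩
  | succ n hn ih =>
    intro e a c ha hc h1 h2
    -- cross inequalities via unperforation
    have cross : ∀ p q : G, 0 ≤ p → 0 ≤ q → e ≤ (n+1) • p → e ≤ (n+1) • q →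
        e ≤ n • p + q := by
      intro p q hp hq hep heq
      have hbig : (n+1) • e ≤ (n+1) • (n • p + q) := by
        calc (n+1) • e = n • e + e := succ_nsmul e n
        _ ≤ n • ((n+1) • p) + (n+1) • q := aux_add_le_add (aux_smul_le hep) heq
        _ = (n+1) • (n • p + q) := by
            rw [smul_add, ← mul_smul, ← mul_smul, Nat.mul_comm]
      have h0 : (0:G) ≤ (n+1) • (n • p + q - e) := by
        rw [smul_sub, sub_nonneg]; exact hbig
      have := hU (n+1) (by omega) _ h0
      rwa [sub_nonneg] at this
    have c1 : e ≤ n • a + c := cross a c ha hc h1 h2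
    have c2 : e ≤ n • c + a := cross c a hc ha h2 h1
    -- pick d with e - n•a, e - n•c, 0 ≤ d ≤ a, c
    have hna : e - n • a ≤ a := by
      rw [sub_le_iff_le_add]
      calc e ≤ (n+1) • a := h1
      _ = a + n • a := by rw [succ_nsmul]; exact add_comm _ _
    have hnac : e - n • a ≤ c := by rw [sub_le_iff_le_add, add_comm]; exact c1
    have hnc : e - n • c ≤ c := by
      rw [sub_le_iff_le_add]
      calc e ≤ (n+1) • c := h2
      _ = c + n • c := by rw [succ_nsmul]; exact add_comm _ _
    have hnca : e - n • c ≤ a := by rw [sub_le_iff_le_add, add_comm]; exact c2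
    obtain ⟨d, hd1, hd2, hd3, hd4, hd5⟩ :=
      aux_interp3 hI (e - n • a) (e - n • c) 0 a c hna hnac hnca hnc ha hc
    -- apply induction hypothesis to e - d
    have hed1 : e - d ≤ n • a := by rwa [sub_le_iff_le_add, add_comm, ← sub_le_iff_le_add]
    have hed2 : e - d ≤ n • c := by rwa [sub_le_iff_le_add, add_comm, ← sub_le_iff_le_add]
    obtain ⟨u', hu'0, hu'a, hu'c, hu'e⟩ := ih (e - d) a c ha hc hed1 hed2
    obtain ⟨u, hud, huu', hua, huc⟩ := hI d u' a c hd4 hd5 hu'a hu'c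
    refine ⟨u, hd3.trans hud, hua, huc, ?_⟩
    calc e = d + (e - d) := by abel
    _ ≤ u + n • u' := aux_add_le_add hud hu'e
    _ ≤ u + n • u := add_le_add_right (aux_smul_le huu') u
    _ = (n+1) • u := by rw [succ_nsmul]; exact add_comm _ _
end Key

/-- A directed partially ordered abelian group is a dimension group (unperforated with
interpolation) if and only if its positive cone satisfies the strong Riesz
interpolation property. -/
theorem stmt9 (G : Type*) [AddCommGroup G] [PartialOrder G]
    [CovariantClass G G (· + ·) (· ≤ ·)]
    (hdir : ∀ a b : G, ∃ c : G, a ≤ c ∧ b ≤ c) :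
    ((∀ n : ℕ, 1 ≤ n → ∀ x : G, 0 ≤ n • x → 0 ≤ x) ∧
     (∀ a₀ a₁ b₀ b₁ : G, a₀ ≤ b₀ → a₀ ≤ b₁ → a₁ ≤ b₀ → a₁ ≤ b₁ →
       ∃ x : G, a₀ ≤ x ∧ a₁ ≤ x ∧ x ≤ b₀ ∧ x ≤ b₁)) ↔
    (∀ n : ℕ, 1 ≤ n → ∀ a b c d : G, 0 ≤ a → 0 ≤ b → 0 ≤ c → 0 ≤ d →
      n • a + b = n • c + d →
      ∃ u v w z : G, 0 ≤ u ∧ 0 ≤ v ∧ 0 ≤ w ∧ 0 ≤ z ∧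
        a = u + v ∧ b = n • w + z ∧ c = u + w ∧ d = n • v + z) := by
  constructor
  · rintro ⟨hU, hI⟩ n hn a b c d ha hb hc hd heq
    have he2 : n • a - d = n • c - b := by
      rw [sub_eq_sub_iff_add_eq_add]
      exact heq
    have he1 : n • a - d ≤ n • a := by
      have := add_le_add_left hd (n • a - d); simpa using this
    have he3 : n • a - d ≤ n • c := by
      rw [he2]
      have := add_le_add_left hb (n • c - b); simpa using this
    obtain ⟨u, hu0, hua, huc, hue⟩ := aux_key hU hI n hn (n • a - d) a c ha hc he1 he3
    refine ⟨u, a - u, c - u, n • u - (n • a - d), hu0, sub_nonneg.2 hua,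
      sub_nonneg.2 huc, sub_nonneg.2 hue, by abel, ?_, by abel, ?_⟩
    · rw [smul_sub, he2]; abel
    · rw [smul_sub]; abel
  · intro hSR
    constructor
    · -- unperforation
      intro n hn x hx
      obtain ⟨k, hk1, hk2⟩ := hdir 0 (-x)
      have hxk : 0 ≤ x + k := by
        have := add_le_add_right hk2 x; simpa using this
      obtain ⟨u, v, w, z, hu, hv, hw, hz, h1, h2, h3, h4⟩ :=
        hSR n hn (x + k) 0 k (n • x) hxk le_rfl hk1 hx
          (by rw [smul_add]; abel)
      have hw0 : w = 0 := by
        have hwle : w ≤ 0 := by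
          calc w ≤ n • w := aux_le_smul hn hw
          _ = -z + (n • w + z) := by abel
          _ = -z := by rw [← h2]; abel
          _ ≤ 0 := by have := add_le_add_left hz (-z); simpa using this
        exact le_antisymm hwle hw
      have hku : k = u := by
        have := h3; rw [hw0, add_zero] at this; exact this
      have hxv : x = v := by
        have h1' : x + u = v + u := by
          rw [hku] at h1; rw [h1]; exact add_comm u v
        exact add_right_cancel h1'
      rw [hxv]; exact hv
    · -- interpolation
      intro a0 a1 b0 b1 h00 h01 h10 h11
      obtain ⟨u, v, w, z, hu, hv, hw, hz, h1, h2, h3, h4⟩ :=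
        hSR 1 le_rfl (b0 - a0) (b1 - a1) (b0 - a1) (b1 - a0)
          (sub_nonneg.2 h00) (sub_nonneg.2 h11) (sub_nonneg.2 h10) (sub_nonneg.2 h01)
          (by rw [one_nsmul, one_nsmul]; abel)
      rw [one_nsmul] at h4
      refine ⟨a0 + v, le_add_of_nonneg_right hv, ?_, ?_, ?_⟩
      · -- a1 ≤ a0 + v : show a0 + v = a1 + w
        have e1 : a0 + (u + v) = a1 + (u + w) := by rw [← h1, ← h3]; abel
        have e2 : u + (a0 + v) = u + (a1 + w) := by
          calc u + (a0 + v) = a0 + (u + v) := by abel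
          _ = a1 + (u + w) := e1
          _ = u + (a1 + w) := by abel
        have e3 : a0 + v = a1 + w := add_left_cancel e2
        rw [e3]; exact le_add_of_nonneg_right hw
      · -- a0 + v ≤ b0
        have hb0 : b0 = u + v + a0 := sub_eq_iff_eq_add.mp h1
        calc a0 + v ≤ a0 + v + u := le_add_of_nonneg_right hu
        _ = b0 := by rw [hb0]; abel
      · -- a0 + v ≤ b1
        have hb1 : b1 = v + z + a0 := sub_eq_iff_eq_add.mp h4
        calc a0 + v ≤ a0 + v + z := le_add_of_nonneg_right hz
        _ = b1 := by rw [hb1]; abel
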